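/- If !F1 | F'1 ~ !F2 | F'2, where F1, F'1, F2, F'2 are finite processes, then !F1 ~ !F2. -/

import Mathlib

namespace CCS

/-- Process terms over a set of actions `A`. -/
inductive Proc (A : Type) where
  | nil : Proc A
  | pre : A → Proc A → Proc A
  | par : Proc A → Proc A → Proc A
  | repl : A → Proc A → Proc A

namespace Proc

/-- Finite processes: no occurrence of replication. -/
def IsFin {A : Type} : Proc A → Prop
  | nil => True
  | pre _ p => IsFin p
  | par p q => IsFin p ∧ IsFin q
  | repl _ _ => False

/-- Processes of the calculus: replication is applied only to prefixed
finite processes, at top level. -/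
def Wf {A : Type} : Proc A → Prop
  | nil => True
  | pre _ p => IsFin p
  | par p q => Wf p ∧ Wf q
  | repl _ p => IsFin p

/-- Size: the number of prefixes. -/
def size {A : Type} : Proc A → ℕ
  | nil => 0
  | pre _ p => size p + 1
  | par p q => size p + size q
  | repl _ p => size p + 1

/-- `reps n p` is the parallel composition of `n` copies of `p`. -/
def reps {A : Type} : ℕ → Proc A → Proc A
  | 0, _ => nil
  | n+1, p => par p (reps n p)

/-- `bang F` is `!F`: for `F = α₁.F₁ | ... | αk.Fk` it is `!α₁.F₁ | ... | !αk.Fk`. -/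
def bang {A : Type} : Proc A → Proc A
  | nil => nil
  | pre a p => repl a p
  | par p q => par (bang p) (bang q)
  | repl a p => repl a p

end Proc

/-- The labelled transition system (no synchronisation). -/
inductive Step {A : Type} : Proc A → A → Proc A → Prop where
  | pre {a : A} {p : Proc A} : Step (Proc.pre a p) a p
  | repl {a : A} {p : Proc A} :
      Step (Proc.repl a p) a (Proc.par (Proc.repl a p) p)
  | parL {p : Proc A} {a : A} {p' : Proc A} (q : Proc A) :
      Step p a p' → Step (Proc.par p q) a (Proc.par p' q)
  | parR {q : Proc A} {a : A} {q' : Proc A} (p : Proc A) :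
      Step q a q' → Step (Proc.par p q) a (Proc.par p q')

/-- Strong bisimulations. -/
def IsBisim {A : Type} (R : Proc A → Proc A → Prop) : Prop :=
  Symmetric R ∧
    ∀ p q, R p q → ∀ a p', Step p a p' → ∃ q', Step q a q' ∧ R p' q'

/-- Strong bisimilarity `~`: the greatest strong bisimulation. -/
def Bisim {A : Type} (p q : Proc A) : Prop :=
  ∃ R, IsBisim R ∧ R p q

/-- The congruence `≡D`: the smallest congruence generated by the abelian
monoid laws for parallel composition (neutral element `0`) and the
distribution law `α.(F | α.F | ... | α.F) = α.F | α.F | ... | α.F`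
(with as many occurrences of `F` on both sides). -/
inductive EqD {A : Type} : Proc A → Proc A → Prop where
  | refl (p : Proc A) : EqD p p
  | symm {p q : Proc A} : EqD p q → EqD q p
  | trans {p q r : Proc A} : EqD p q → EqD q r → EqD p r
  | parComm (p q : Proc A) : EqD (Proc.par p q) (Proc.par q p)
  | parAssoc (p q r : Proc A) :
      EqD (Proc.par (Proc.par p q) r) (Proc.par p (Proc.par q r))
  | parNil (p : Proc A) : EqD (Proc.par p Proc.nil) p
  | distr (a : A) (F : Proc A) (n : ℕ) (hF : F.IsFin) :
      EqD (Proc.pre a (Proc.par F (Proc.reps n (Proc.pre a F))))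
          (Proc.reps (n + 1) (Proc.pre a F))
  | congPre (a : A) {p q : Proc A} : EqD p q → EqD (Proc.pre a p) (Proc.pre a q)
  | congPar {p p' q q' : Proc A} :
      EqD p p' → EqD q q' → EqD (Proc.par p q) (Proc.par p' q')
  | congRepl (a : A) {p q : Proc A} : EqD p q → EqD (Proc.repl a p) (Proc.repl a q)

/-- Finite (single-hole) contexts `D ::= [] | α.D | D|F`. -/
inductive FCtx (A : Type) where
  | hole : FCtx A
  | pre : A → FCtx A → FCtx A
  | par : FCtx A → Proc A → FCtx A

/-- Filling the hole of a finite context. -/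
def FCtx.fill {A : Type} : FCtx A → Proc A → Proc A
  | .hole, p => p
  | .pre a d, p => Proc.pre a (d.fill p)
  | .par d f, p => Proc.par (d.fill p) f

/-- Well-formedness of a finite context: the processes placed in parallel
are finite. -/
def FCtx.Wf {A : Type} : FCtx A → Prop
  | .hole => True
  | .pre _ d => d.Wf
  | .par d f => d.Wf ∧ f.IsFin

/-- Single-hole contexts `C ::= D | !α.D | C|P` (the hole never occurs
directly under a replication). -/
inductive Ctx (A : Type) where
  | ofD : FCtx A → Ctx A
  | repl : A → FCtx A → Ctx A
  | par : Ctx A → Proc A → Ctx A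

/-- Filling the hole of a context. -/
def Ctx.fill {A : Type} : Ctx A → Proc A → Proc A
  | .ofD d, p => d.fill p
  | .repl a d, p => Proc.repl a (d.fill p)
  | .par c q, p => Proc.par (c.fill p) q

/-- Well-formedness of a context. -/
def Ctx.Wf {A : Type} : Ctx A → Prop
  | .ofD d => d.Wf
  | .repl _ d => d.Wf
  | .par c p => c.Wf ∧ p.Wf

/-- `k` consecutive transitions. -/
inductive NSteps {A : Type} : Proc A → ℕ → Proc A → Prop where
  | zero (p : Proc A) : NSteps p 0 p
  | succ {p : Proc A} {a : A} {p' : Proc A} {k : ℕ} {q : Proc A} :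
      Step p a p' → NSteps p' k q → NSteps p (k + 1) q

/-- `P ⇒k Q`: `k` transitions from `P` reach a process `≡D Q`. -/
def Reduct {A : Type} (p : Proc A) (k : ℕ) (q : Proc A) : Prop :=
  ∃ p', NSteps p k p' ∧ EqD p' q

/-- `TopRepl S a G` holds when `!a.G` is one of the (top-level) replicated
parallel components of `S`. -/
inductive TopRepl {A : Type} : Proc A → A → Proc A → Prop where
  | repl (a : A) (p : Proc A) : TopRepl (Proc.repl a p) a p
  | parL {p : Proc A} {a : A} {r : Proc A} (q : Proc A) :
      TopRepl p a r → TopRepl (Proc.par p q) a r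
  | parR {q : Proc A} {a : A} {r : Proc A} (p : Proc A) :
      TopRepl q a r → TopRepl (Proc.par p q) a r

/-- `S` has only replicated components: `S = ∏i !αi.Si`. -/
def ReplOnly {A : Type} : Proc A → Prop
  | .nil => True
  | .pre _ _ => False
  | .par p q => ReplOnly p ∧ ReplOnly q
  | .repl _ p => p.IsFin

/-- `S ⫫ F` : for no component `!αi.Si` of `S` and no `k` do we have
`F ⇒k αi.Si`. -/
def Dis {A : Type} (S F : Proc A) : Prop :=
  ∀ a G, TopRepl S a G → ∀ k, ¬ Reduct F k (Proc.pre a G)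

/-- `S ▷ R` : there is `k > 0` with `S ⇒k S | R`. -/
def Purg {A : Type} (S R : Proc A) : Prop :=
  ∃ k, 0 < k ∧ Reduct S k (Proc.par S R)

/-- A process is a seed if no (well-formed) process of strictly smaller
size is bisimilar to it. -/
def IsSeed {A : Type} (p : Proc A) : Prop :=
  p.Wf ∧ ∀ q : Proc A, q.Wf → Bisim q p → p.size ≤ q.size

/-- The rewriting relation `⤳_T` (first argument), defined modulo `≡D` by
the axioms (B1) `C[α.F] ⤳_{!α.F|F'} C[0]` and (B2) `!α.F | !α.F | P ⤳_Q !α.F | P`. -/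
inductive Rw {A : Type} : Proc A → Proc A → Proc A → Prop where
  | B1 {a : A} {F F' : Proc A} (C : Ctx A) :
      F.IsFin → F'.Wf → C.Wf →
      Rw (Proc.par (Proc.repl a F) F') (C.fill (Proc.pre a F)) (C.fill Proc.nil)
  | B2 {a : A} {F P Q : Proc A} :
      F.IsFin → P.Wf → Q.Wf →
      Rw Q (Proc.par (Proc.repl a F) (Proc.par (Proc.repl a F) P))
           (Proc.par (Proc.repl a F) P)
  | eqD {T T' P P' Q Q' : Proc A} :
      EqD T T' → EqD P P' → Rw T' P' Q' → EqD Q Q' → Rw T P Q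

/-- `⤳*_T` : the reflexive transitive closure of `⤳_T`. -/
def RwStar {A : Type} (T : Proc A) : Proc A → Proc A → Prop :=
  Relation.ReflTransGen (Rw T)

/-- Convertibility `P ⋈ Q`: some process `T` satisfies `P ⤳*_T T` and `Q ⤳*_T T`. -/
def Convert {A : Type} (P Q : Proc A) : Prop :=
  ∃ T : Proc A, T.Wf ∧ RwStar T P T ∧ RwStar T Q T

/-- `∏i αi.Fi` for a list of prefixed components. -/
def prodPre {A : Type} (l : List (A × Proc A)) : Proc A :=
  (l.map fun x => Proc.pre x.1 x.2).foldr Proc.par Proc.nil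

/-- `∏i !αi.Fi` for a list of prefixed components. -/
def bangProd {A : Type} (l : List (A × Proc A)) : Proc A :=
  (l.map fun x => Proc.repl x.1 x.2).foldr Proc.par Proc.nil

end CCS

namespace CCS
open Proc

variable {A : Type}

/-! ### Basic facts about `Step` -/

lemma step_nil {a : A} {r : Proc A} (h : Step Proc.nil a r) : False := by cases h

lemma step_pre_inv {a b : A} {p r : Proc A} (h : Step (Proc.pre a p) b r) :
    b = a ∧ r = p := by cases h; exact ⟨rfl, rfl⟩

lemma step_par_inv {p q r : Proc A} {a : A} (h : Step (Proc.par p q) a r) :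
    (∃ p', Step p a p' ∧ r = Proc.par p' q) ∨ (∃ q', Step q a q' ∧ r = Proc.par p q') := by
  cases h with
  | parL q h => exact Or.inl ⟨_, h, rfl⟩
  | parR p h => exact Or.inr ⟨_, h, rfl⟩

/-! ### Basic facts about `Bisim` -/

lemma bisim_refl (p : Proc A) : Bisim p p := by
  refine ⟨Eq, ⟨fun a b h => h.symm, ?_⟩, rfl⟩
  rintro p q rfl a p' h
  exact ⟨p', h, rfl⟩

theorem Bisim.symm {p q : Proc A} (h : Bisim p q) : Bisim q p := by
  obtain ⟨R, hR, hpq⟩ := h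
  exact ⟨R, hR, hR.1 hpq⟩

lemma bisim_step {p q : Proc A} (h : Bisim p q) {a : A} {p' : Proc A}
    (hs : Step p a p') : ∃ q', Step q a q' ∧ Bisim p' q' := by
  obtain ⟨R, hR, hpq⟩ := h
  obtain ⟨q', hq', hR'⟩ := hR.2 p q hpq a p' hs
  exact ⟨q', hq', ⟨R, hR, hR'⟩⟩

theorem Bisim.trans {p q r : Proc A} (h1 : Bisim p q) (h2 : Bisim q r) : Bisim p r := by
  refine ⟨fun x z => ∃ y, Bisim x y ∧ Bisim y z, ⟨?_, ?_⟩, q, h1, h2⟩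
  · rintro x z ⟨y, hxy, hyz⟩; exact ⟨y, hyz.symm, hxy.symm⟩
  · rintro x z ⟨y, hxy, hyz⟩ a x' hx
    obtain ⟨y', hy, hxy'⟩ := bisim_step hxy hx
    obtain ⟨z', hz, hyz'⟩ := bisim_step hyz hy
    exact ⟨z', hz, y', hxy', hyz'⟩

lemma par_congL {p q : Proc A} (h : Bisim p q) (r : Proc A) :
    Bisim (Proc.par p r) (Proc.par q r) := by
  refine ⟨fun x y => ∃ p q r, Bisim p q ∧ x = Proc.par p r ∧ y = Proc.par q r,
    ⟨?_, ?_⟩, p, q, r, h, rfl, rfl⟩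
  · rintro x y ⟨p, q, r, h, rfl, rfl⟩; exact ⟨q, p, r, h.symm, rfl, rfl⟩
  · rintro x y ⟨p, q, r, h, rfl, rfl⟩ a x' hx
    rcases step_par_inv hx with ⟨p', hp, rfl⟩ | ⟨r', hr, rfl⟩
    · obtain ⟨q', hq, h'⟩ := bisim_step h hp
      exact ⟨Proc.par q' r, Step.parL r hq, p', q', r, h', rfl, rfl⟩
    · exact ⟨Proc.par q r', Step.parR q hr, p, q, r', h, rfl, rfl⟩

lemma par_comm (p q : Proc A) : Bisim (Proc.par p q) (Proc.par q p) := by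
  refine ⟨fun x y => ∃ p q, x = Proc.par p q ∧ y = Proc.par q p, ⟨?_, ?_⟩, p, q, rfl, rfl⟩
  · rintro x y ⟨p, q, rfl, rfl⟩; exact ⟨q, p, rfl, rfl⟩
  · rintro x y ⟨p, q, rfl, rfl⟩ a x' hx
    rcases step_par_inv hx with ⟨p', hp, rfl⟩ | ⟨q', hq, rfl⟩
    · exact ⟨Proc.par q p', Step.parR q hp, p', q, rfl, rfl⟩
    · exact ⟨Proc.par q' p, Step.parL p hq, p, q', rfl, rfl⟩

lemma par_congR (p : Proc A) {q r : Proc A} (h : Bisim q r) :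
    Bisim (Proc.par p q) (Proc.par p r) :=
  (par_comm p q).trans (((par_congL h p)).trans (par_comm r p))

lemma par_cong {p q r s : Proc A} (h1 : Bisim p q) (h2 : Bisim r s) :
    Bisim (Proc.par p r) (Proc.par q s) :=
  (par_congL h1 r).trans (par_congR q h2)

lemma par_assoc (p q r : Proc A) :
    Bisim (Proc.par (Proc.par p q) r) (Proc.par p (Proc.par q r)) := by
  refine ⟨fun x y => (∃ p q r, x = Proc.par (Proc.par p q) r ∧ y = Proc.par p (Proc.par q r))
    ∨ (∃ p q r, y = Proc.par (Proc.par p q) r ∧ x = Proc.par p (Proc.par q r)),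
    ⟨?_, ?_⟩, Or.inl ⟨p, q, r, rfl, rfl⟩⟩
  · rintro x y (⟨p, q, r, rfl, rfl⟩ | ⟨p, q, r, rfl, rfl⟩)
    · exact Or.inr ⟨p, q, r, rfl, rfl⟩
    · exact Or.inl ⟨p, q, r, rfl, rfl⟩
  · rintro x y (⟨p, q, r, rfl, rfl⟩ | ⟨p, q, r, rfl, rfl⟩) a x' hx
    · rcases step_par_inv hx with ⟨pq', hpq, rfl⟩ | ⟨r', hr, rfl⟩
      · rcases step_par_inv hpq with ⟨p', hp, rfl⟩ | ⟨q', hq, rfl⟩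
        · exact ⟨_, Step.parL _ hp, Or.inl ⟨p', q, r, rfl, rfl⟩⟩
        · exact ⟨_, Step.parR _ (Step.parL _ hq), Or.inl ⟨p, q', r, rfl, rfl⟩⟩
      · exact ⟨_, Step.parR _ (Step.parR _ hr), Or.inl ⟨p, q, r', rfl, rfl⟩⟩
    · rcases step_par_inv hx with ⟨p', hp, rfl⟩ | ⟨qr', hqr, rfl⟩
      · exact ⟨_, Step.parL _ (Step.parL _ hp), Or.inr ⟨p', q, r, rfl, rfl⟩⟩
      · rcases step_par_inv hqr with ⟨q', hq, rfl⟩ | ⟨r', hr, rfl⟩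
        · exact ⟨_, Step.parL _ (Step.parR _ hq), Or.inr ⟨p, q', r, rfl, rfl⟩⟩
        · exact ⟨_, Step.parR _ hr, Or.inr ⟨p, q, r', rfl, rfl⟩⟩

lemma par_nil (p : Proc A) : Bisim (Proc.par p Proc.nil) p := by
  refine ⟨fun x y => x = Proc.par y Proc.nil ∨ y = Proc.par x Proc.nil,
    ⟨?_, ?_⟩, Or.inl rfl⟩
  · rintro x y (rfl | rfl)
    · exact Or.inr rfl
    · exact Or.inl rfl
  · rintro x y (rfl | rfl) a x' hx
    · rcases step_par_inv hx with ⟨p', hp, rfl⟩ | ⟨q', hq, _⟩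
      · exact ⟨p', hp, Or.inl rfl⟩
      · exact absurd hq step_nil
    · exact ⟨Proc.par x' Proc.nil, Step.parL _ hx, Or.inr rfl⟩

lemma nil_par (p : Proc A) : Bisim (Proc.par Proc.nil p) p :=
  (par_comm _ _).trans (par_nil p)

lemma par_rot (p q r : Proc A) :
    Bisim (Proc.par (Proc.par p q) r) (Proc.par (Proc.par p r) q) :=
  ((par_assoc p q r).trans (par_congR p (par_comm q r))).trans (par_assoc p r q).symm

lemma par_exch (w x y z : Proc A) :
    Bisim (Proc.par (Proc.par w x) (Proc.par y z)) (Proc.par (Proc.par w y) (Proc.par x z)) := by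
  refine (par_assoc _ _ _).trans (Bisim.trans ?_ (par_assoc w y (Proc.par x z)).symm)
  refine par_congR w ?_
  exact ((par_assoc x y z).symm.trans (par_congL (par_comm x y) z)).trans (par_assoc y x z)

/-! ### Bisimulation up to `~` -/

def UpC (R : Proc A → Proc A → Prop) (x y : Proc A) : Prop :=
  ∃ u v, Bisim x u ∧ R u v ∧ Bisim v y

lemma bisim_of_upto {R : Proc A → Proc A → Prop} (hsym : Symmetric R)
    (h : ∀ p q, R p q → ∀ a p', Step p a p' → ∃ q', Step q a q' ∧ UpC R p' q')
    {p q : Proc A} (hpq : R p q) : Bisim p q := by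
  refine ⟨UpC R, ⟨?_, ?_⟩, p, q, bisim_refl p, hpq, bisim_refl q⟩
  · rintro x y ⟨u, v, hxu, huv, hvy⟩
    exact ⟨v, u, hvy.symm, hsym huv, hxu.symm⟩
  · rintro x y ⟨u, v, hxu, huv, hvy⟩ a x' hx
    obtain ⟨u', hu, hxu'⟩ := bisim_step hxu hx
    obtain ⟨v', hv, huv'⟩ := h u v huv a u' hu
    obtain ⟨y', hy, hvy'⟩ := bisim_step hvy hv
    obtain ⟨s, t, hus, hst, htv⟩ := huv'
    exact ⟨y', hy, s, t, hxu'.trans hus, hst, htv.trans hvy'⟩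

end CCS

namespace CCS
open Proc

variable {A : Type}

/-! ### Finite processes -/

lemma stepFin {p : Proc A} {a : A} {p' : Proc A} (h : Step p a p') (hp : p.IsFin) :
    p'.IsFin := by
  induction h with
  | pre => exact hp
  | repl => exact absurd hp (by simp [Proc.IsFin])
  | parL q h ih => exact ⟨ih hp.1, hp.2⟩
  | parR p h ih => exact ⟨hp.1, ih hp.2⟩

lemma stepSize {p : Proc A} {a : A} {p' : Proc A} (h : Step p a p') (hp : p.IsFin) :
    p'.size + 1 = p.size := by
  induction h with
  | pre => rfl
  | repl => exact absurd hp (by simp [Proc.IsFin])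
  | parL q h ih =>
      show _ + _ + 1 = _ + _
      rw [Nat.add_right_comm, ih hp.1]
  | parR p h ih =>
      show _ + _ + 1 = _ + _
      rw [Nat.add_assoc, ih hp.2]

lemma sizePos {p : Proc A} (hp : p.IsFin) (h : 0 < p.size) :
    ∃ a p', Step p a p' := by
  induction p with
  | nil => simp [Proc.size] at h
  | pre a p _ => exact ⟨a, p, Step.pre⟩
  | par p q ihp ihq =>
      have h' : 0 < p.size ∨ 0 < q.size := by
        have : 0 < p.size + q.size := h
        omega
      rcases h' with hp' | hq'
      · obtain ⟨a, p', hs⟩ := ihp hp.1 hp'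
        exact ⟨a, _, Step.parL q hs⟩
      · obtain ⟨a, q', hs⟩ := ihq hp.2 hq'
        exact ⟨a, _, Step.parR p hs⟩
  | repl a p _ => exact absurd hp (by simp [Proc.IsFin])

lemma sizeZeroNil {p : Proc A} (hp : p.IsFin) (h : p.size = 0) : Bisim p Proc.nil := by
  induction p with
  | nil => exact bisim_refl _
  | pre a p _ => simp [Proc.size] at h
  | par p q ihp ihq =>
      have h' : p.size = 0 ∧ q.size = 0 := by
        have : p.size + q.size = 0 := h
        omega
      exact (par_cong (ihp hp.1 h'.1) (ihq hp.2 h'.2)).trans (par_nil _)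
  | repl a p _ => exact absurd hp (by simp [Proc.IsFin])

/-! ### Replicated processes -/

lemma replOnly_bang {F : Proc A} (h : F.IsFin) : ReplOnly F.bang := by
  induction F with
  | nil => trivial
  | pre a p _ => exact h
  | par p q ihp ihq => exact ⟨ihp h.1, ihq h.2⟩
  | repl a p _ => exact absurd h (by simp [Proc.IsFin])

lemma replOnly_step {S : Proc A} {a : A} {S' : Proc A} (hS : ReplOnly S)
    (h : Step S a S') : ∃ G, G.IsFin ∧ Bisim S' (Proc.par S G) := by
  induction h with
  | pre => exact absurd hS (by simp [ReplOnly])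
  | repl => exact ⟨_, hS, bisim_refl _⟩
  | parL q h ih =>
      obtain ⟨G, hG, hB⟩ := ih hS.1
      exact ⟨G, hG, (par_congL hB q).trans (par_rot _ _ _)⟩
  | parR p h ih =>
      obtain ⟨G, hG, hB⟩ := ih hS.2
      exact ⟨G, hG, (par_congR p hB).trans (par_assoc _ _ _).symm⟩

/-! ### Components of a finite process -/

def comps : Proc A → List (A × Proc A)
  | .nil => []
  | .pre a p => [(a, p)]
  | .par p q => comps p ++ comps q
  | .repl _ _ => []

lemma comps_fin {K : Proc A} (hK : K.IsFin) : ∀ c ∈ comps K, (c.2).IsFin := by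
  induction K with
  | nil => intro c hc; simp [comps] at hc
  | pre a p _ => intro c hc; simp [comps] at hc; subst hc; exact hK
  | par p q ihp ihq =>
      intro c hc
      rcases List.mem_append.1 hc with h | h
      · exact ihp hK.1 c h
      · exact ihq hK.2 c h
  | repl a p _ => exact absurd hK (by simp [Proc.IsFin])

@[simp] lemma prodPre_nil : prodPre ([] : List (A × Proc A)) = Proc.nil := rfl
@[simp] lemma prodPre_cons (c : A × Proc A) (l : List (A × Proc A)) :
    prodPre (c :: l) = Proc.par (Proc.pre c.1 c.2) (prodPre l) := rfl

lemma prodPre_append (l₁ l₂ : List (A × Proc A)) :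
    Bisim (prodPre (l₁ ++ l₂)) (Proc.par (prodPre l₁) (prodPre l₂)) := by
  induction l₁ with
  | nil => exact (nil_par _).symm
  | cons c l ih =>
      exact (par_congR _ ih).trans (par_assoc _ _ _).symm

lemma comps_spec {K : Proc A} (hK : K.IsFin) : Bisim K (prodPre (comps K)) := by
  induction K with
  | nil => exact bisim_refl _
  | pre a p _ => exact (par_nil _).symm
  | par p q ihp ihq =>
      exact ((par_cong (ihp hK.1) (ihq hK.2)).trans (prodPre_append _ _).symm)
  | repl a p _ => exact absurd hK (by simp [Proc.IsFin])

lemma prodPre_perm {l₁ l₂ : List (A × Proc A)} (h : l₁.Perm l₂) :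
    Bisim (prodPre l₁) (prodPre l₂) := by
  induction h with
  | nil => exact bisim_refl _
  | cons c _ ih => exact par_congR _ ih
  | swap x y l =>
      exact ((par_assoc _ _ _).symm.trans
        (par_congL (par_comm _ _) _)).trans (par_assoc _ _ _)
  | trans _ _ ih1 ih2 => exact ih1.trans ih2

lemma ppStep1 {L : List (A × Proc A)} {a : A} {W : Proc A}
    (h : Step (prodPre L) a W) :
    ∃ G L', (a, G) ∈ L ∧ L.Perm ((a, G) :: L') ∧ Bisim W (Proc.par G (prodPre L')) := by
  induction L generalizing W with
  | nil => exact absurd h step_nil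
  | cons c l ih =>
      rw [prodPre_cons] at h
      rcases step_par_inv h with ⟨p', hp, rfl⟩ | ⟨q', hq, rfl⟩
      · obtain ⟨rfl, rfl⟩ := step_pre_inv hp
        exact ⟨c.2, l, by simp, by simp, bisim_refl _⟩
      · obtain ⟨G, L', hmem, hperm, hB⟩ := ih hq
        refine ⟨G, c :: L', List.mem_cons_of_mem _ hmem, ?_, ?_⟩
        · exact ((hperm.cons c).trans (List.Perm.swap _ _ _))
        · exact ((par_congR _ hB).trans
            ((par_assoc _ _ _).symm.trans ((par_congL (par_comm _ _) _).trans
              (par_assoc _ _ _))))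

lemma ppStep2 {L : List (A × Proc A)} {a : A} {G : Proc A} (h : (a, G) ∈ L) :
    ∃ W L', Step (prodPre L) a W ∧ L.Perm ((a, G) :: L') ∧
      Bisim W (Proc.par G (prodPre L')) := by
  induction L with
  | nil => simp at h
  | cons c l ih =>
      rcases List.mem_cons.1 h with h | h
      · subst h
        exact ⟨Proc.par G (prodPre l), l, Step.parL _ Step.pre, by simp, bisim_refl _⟩
      · obtain ⟨W, L', hs, hperm, hB⟩ := ih h
        refine ⟨Proc.par (Proc.pre c.1 c.2) W, c :: L', Step.parR _ hs,
          (hperm.cons c).trans (List.Perm.swap _ _ _), ?_⟩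
        exact (par_congR _ hB).trans
          ((par_assoc _ _ _).symm.trans ((par_congL (par_comm _ _) _).trans
            (par_assoc _ _ _)))

/-! ### Steps of `bang` -/

lemma bangStep1 {K : Proc A} (hK : K.IsFin) {a : A} {W : Proc A}
    (h : Step K.bang a W) :
    ∃ G, (a, G) ∈ comps K ∧ Bisim W (Proc.par K.bang G) := by
  induction K generalizing W with
  | nil => exact absurd h step_nil
  | pre b p _ =>
      cases h
      exact ⟨p, by simp [comps], bisim_refl _⟩
  | par p q ihp ihq =>
      rcases step_par_inv h with ⟨p', hp, rfl⟩ | ⟨q', hq, rfl⟩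
      · obtain ⟨G, hmem, hB⟩ := ihp hK.1 hp
        exact ⟨G, List.mem_append.2 (Or.inl hmem),
          (par_congL hB _).trans (par_rot _ _ _)⟩
      · obtain ⟨G, hmem, hB⟩ := ihq hK.2 hq
        exact ⟨G, List.mem_append.2 (Or.inr hmem),
          (par_congR _ hB).trans (par_assoc _ _ _).symm⟩
  | repl a p _ => exact absurd hK (by simp [Proc.IsFin])

lemma bangStep2 {K : Proc A} (hK : K.IsFin) {a : A} {G : Proc A}
    (h : (a, G) ∈ comps K) :
    ∃ W, Step K.bang a W ∧ Bisim W (Proc.par K.bang G) := by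
  induction K with
  | nil => simp [comps] at h
  | pre b p _ =>
      simp [comps] at h
      obtain ⟨rfl, rfl⟩ := h
      exact ⟨_, Step.repl, bisim_refl _⟩
  | par p q ihp ihq =>
      rcases List.mem_append.1 h with h | h
      · obtain ⟨W, hs, hB⟩ := ihp hK.1 h
        exact ⟨_, Step.parL _ hs, (par_congL hB _).trans (par_rot _ _ _)⟩
      · obtain ⟨W, hs, hB⟩ := ihq hK.2 h
        exact ⟨_, Step.parR _ hs, (par_congR _ hB).trans (par_assoc _ _ _).symm⟩
  | repl a p _ => exact absurd hK (by simp [Proc.IsFin])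

/-! ### Enumerating transitions -/

def outs : Proc A → List (A × Proc A)
  | .nil => []
  | .pre a p => [(a, p)]
  | .par p q => ((outs p).map fun t => (t.1, Proc.par t.2 q)) ++
      ((outs q).map fun t => (t.1, Proc.par p t.2))
  | .repl a p => [(a, Proc.par (Proc.repl a p) p)]

lemma mem_outs_of_step {p : Proc A} {a : A} {p' : Proc A} (h : Step p a p') :
    (a, p') ∈ outs p := by
  induction h with
  | pre => simp [outs]
  | repl => simp [outs]
  | parL q h ih =>
      exact List.mem_append.2 (Or.inl (List.mem_map.2 ⟨_, ih, rfl⟩))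
  | parR p h ih =>
      exact List.mem_append.2 (Or.inr (List.mem_map.2 ⟨_, ih, rfl⟩))

/-! ### Counting and pigeonhole -/

open Classical in
noncomputable def cnt {β : Type} (c : β) : List β → ℕ
  | [] => 0
  | x :: l => (if x = c then 1 else 0) + cnt c l

lemma cnt_append {β : Type} (c : β) (l₁ l₂ : List β) :
    cnt c (l₁ ++ l₂) = cnt c l₁ + cnt c l₂ := by
  induction l₁ with
  | nil => simp [cnt]
  | cons x l ih => simp [cnt, ih]; omega

lemma cnt_perm {β : Type} {l₁ l₂ : List β} (h : l₁.Perm l₂) (c : β) :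
    cnt c l₁ = cnt c l₂ := by
  induction h with
  | nil => rfl
  | cons x _ ih => simp [cnt, ih]
  | swap x y l => simp [cnt]; omega
  | trans _ _ ih1 ih2 => exact ih1.trans ih2

lemma cnt_pos_of_mem {β : Type} {c : β} {l : List β} (h : c ∈ l) : 0 < cnt c l := by
  induction l with
  | nil => simp at h
  | cons x l ih =>
      rcases List.mem_cons.1 h with h | h
      · subst h; simp [cnt]
      · have := ih h
        simp [cnt]; omega

lemma mem_of_cnt_pos {β : Type} {c : β} {l : List β} (h : 0 < cnt c l) : c ∈ l := by
  induction l with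
  | nil => simp [cnt] at h
  | cons x l ih =>
      by_cases hx : x = c
      · subst hx; exact List.mem_cons_self
      · simp [cnt, hx] at h
        exact List.mem_cons_of_mem _ (ih h)

def nCopies {β : Type} (l : List β) : ℕ → List β
  | 0 => []
  | n+1 => l ++ nCopies l n

lemma mem_nCopies {β : Type} {l : List β} {c : β} {n : ℕ} (h : c ∈ nCopies l n) :
    c ∈ l := by
  induction n with
  | zero => simp [nCopies] at h
  | succ n ih =>
      rcases List.mem_append.1 h with h | h
      · exact h
      · exact ih h

lemma cnt_nCopies {β : Type} {l : List β} {c : β} (h : c ∈ l) (n : ℕ) :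
    n ≤ cnt c (nCopies l n) := by
  induction n with
  | zero => exact Nat.zero_le _
  | succ n ih =>
      have := cnt_pos_of_mem h
      rw [show nCopies l (n+1) = l ++ nCopies l n from rfl, cnt_append]
      omega

lemma pigeon {τ : Type} (T : List τ) (Q : ℕ → τ → Prop)
    (h : ∀ n, ∃ t ∈ T, Q n t) : ∃ t ∈ T, ∀ N, ∃ n, N ≤ n ∧ Q n t := by
  induction T generalizing Q with
  | nil => obtain ⟨t, ht, _⟩ := h 0; simp at ht
  | cons t T ih =>
      by_cases hc : ∀ N, ∃ n, N ≤ n ∧ Q n t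
      · exact ⟨t, List.mem_cons_self, hc⟩
      · push_neg at hc
        obtain ⟨N₀, hN₀⟩ := hc
        have h' : ∀ n, ∃ t' ∈ T, Q (n + N₀) t' := by
          intro n
          obtain ⟨t', ht', hq⟩ := h (n + N₀)
          rcases List.mem_cons.1 ht' with rfl | ht'
          · exact absurd hq (hN₀ (n + N₀) (Nat.le_add_left _ _))
          · exact ⟨t', ht', hq⟩
        obtain ⟨t', ht', hall⟩ := ih _ h'
        refine ⟨t', List.mem_cons_of_mem _ ht', fun N => ?_⟩
        obtain ⟨n, hn, hq⟩ := hall N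
        exact ⟨n + N₀, Nat.le_trans hn (Nat.le_add_right _ _), hq⟩

end CCS

namespace CCS
open Proc

variable {A : Type}

/-! ### Absorption -/

lemma topRepl_step {Z : Proc A} {a : A} {G : Proc A} (hT : TopRepl Z a G)
    {b : A} {Z' : Proc A} (h : Step Z b Z') : TopRepl Z' a G := by
  induction h with
  | pre => cases hT
  | repl =>
      cases hT
      exact TopRepl.parL _ (TopRepl.repl _ _)
  | parL q h ih =>
      cases hT with
      | parL q hT => exact TopRepl.parL _ (ih hT)
      | parR p hT => exact TopRepl.parR _ hT
  | parR p h ih =>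
      cases hT with
      | parL q hT => exact TopRepl.parL _ hT
      | parR p hT => exact TopRepl.parR _ (ih hT)

lemma fireTopRepl {Z : Proc A} {a : A} {G : Proc A} (hT : TopRepl Z a G) :
    ∃ Z', Step Z a Z' ∧ Bisim Z' (Proc.par Z G) := by
  induction hT with
  | repl a p => exact ⟨_, Step.repl, bisim_refl _⟩
  | parL q hT ih =>
      obtain ⟨Z', hs, hB⟩ := ih
      exact ⟨_, Step.parL _ hs, (par_congL hB _).trans (par_rot _ _ _)⟩
  | parR p hT ih =>
      obtain ⟨Z', hs, hB⟩ := ih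
      exact ⟨_, Step.parR _ hs, (par_congR _ hB).trans (par_assoc _ _ _).symm⟩

lemma absCore {a : A} {G : Proc A} {Z : Proc A} (hT : TopRepl Z a G) :
    Bisim (Proc.par Z (Proc.pre a G)) Z := by
  refine bisim_of_upto
    (R := fun x y =>
      x = y ∨ (∃ V, TopRepl V a G ∧ x = Proc.par V (Proc.pre a G) ∧ y = V) ∨
        (∃ V, TopRepl V a G ∧ y = Proc.par V (Proc.pre a G) ∧ x = V))
    ?_ ?_ (Or.inr (Or.inl ⟨Z, hT, rfl, rfl⟩))
  · rintro x y (rfl | ⟨V, hV, rfl, rfl⟩ | ⟨V, hV, rfl, rfl⟩)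
    · exact Or.inl rfl
    · exact Or.inr (Or.inr ⟨y, hV, rfl, rfl⟩)
    · exact Or.inr (Or.inl ⟨x, hV, rfl, rfl⟩)
  · rintro x y (rfl | ⟨V, hV, rfl, rfl⟩ | ⟨V, hV, rfl, rfl⟩) b x' hx
    · exact ⟨x', hx, x', x', bisim_refl _, Or.inl rfl, bisim_refl _⟩
    · rcases step_par_inv hx with ⟨V', hVs, rfl⟩ | ⟨w, hw, rfl⟩
      · exact ⟨V', hVs, _, V', bisim_refl _,
          Or.inr (Or.inl ⟨V', topRepl_step hV hVs, rfl, rfl⟩), bisim_refl _⟩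
      · obtain ⟨hb, hwG⟩ := step_pre_inv hw
        subst hb
        obtain ⟨V', hs, hB⟩ := fireTopRepl hV
        refine ⟨V', hs, Proc.par y w, Proc.par y w, bisim_refl _, Or.inl rfl, ?_⟩
        rw [hwG]
        exact hB.symm
    · refine ⟨Proc.par x' (Proc.pre a G), Step.parL _ hx, x',
        Proc.par x' (Proc.pre a G), bisim_refl _,
        Or.inr (Or.inr ⟨x', topRepl_step hV hx, rfl, rfl⟩), bisim_refl _⟩

lemma bang_absorb {W : Proc A} (hW : W.IsFin) :
    Bisim (Proc.par W.bang W) W.bang := by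
  induction W with
  | nil => exact par_nil _
  | pre a p _ => exact absCore (TopRepl.repl a p)
  | par p q ihp ihq =>
      exact (par_exch _ _ _ _).trans (par_cong (ihp hW.1) (ihq hW.2))
  | repl a p _ => exact absurd hW (by simp [Proc.IsFin])

/-! ### Extracting the replicated part -/

lemma run {B : Proc A} (hB : ReplOnly B) :
    ∀ n (W : Proc A), W.IsFin → W.size = n → ∀ (P W₂ : Proc A), W₂.IsFin →
      Bisim (Proc.par P W) (Proc.par B W₂) →
      ∃ H, H.IsFin ∧ Bisim P (Proc.par B H) := by
  intro n
  induction n using Nat.strong_induction_on with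
  | _ n ih =>
    intro W hWfin hWsize P W₂ hW₂ h
    rcases Nat.eq_zero_or_pos n with rfl | hpos
    · refine ⟨W₂, hW₂, ?_⟩
      exact ((par_nil P).symm.trans (par_congR P (sizeZeroNil hWfin hWsize).symm)).trans h
    · obtain ⟨a, W', hsW⟩ := sizePos hWfin (hWsize ▸ hpos)
      obtain ⟨Z, hsZ, hZ⟩ := bisim_step h (Step.parR P hsW)
      have hW'fin := stepFin hsW hWfin
      have hW'size : W'.size = n - 1 := by
        have := stepSize hsW hWfin
        omega
      rcases step_par_inv hsZ with ⟨B', hsB, rfl⟩ | ⟨W₂', hsW₂, rfl⟩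
      · obtain ⟨G, hGfin, hGB⟩ := replOnly_step hB hsB
        have hZ' : Bisim (Proc.par P W') (Proc.par B (Proc.par G W₂)) :=
          hZ.trans ((par_congL hGB _).trans
            ((par_rot _ _ _).trans ((par_assoc _ _ _).trans
              (par_congR _ (par_comm _ _)))))
        exact ih (n-1) (by omega) W' hW'fin hW'size P (Proc.par G W₂) (show (Proc.par G W₂).IsFin from ⟨hGfin, hW₂⟩) hZ'
      · exact ih (n-1) (by omega) W' hW'fin hW'size P _ (stepFin hsW₂ hW₂) hZ

end CCS

namespace CCS
open Proc

variable {A : Type}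

/-! ### Rearrangement helpers -/

lemma rearr1 {S' S G : Proc A} (h : Bisim S' (Proc.par S G)) (U V : Proc A) :
    Bisim (Proc.par S' (Proc.par U V)) (Proc.par S (Proc.par (Proc.par U G) V)) :=
  (par_congL h _).trans <| (par_assoc _ _ _).trans <| par_congR _ <|
    (par_assoc _ _ _).symm.trans (par_congL (par_comm G U) V)

lemma rearr2 {S' S G : Proc A} (h : Bisim S' (Proc.par S G)) (U V : Proc A) :
    Bisim (Proc.par S' (Proc.par U V)) (Proc.par S (Proc.par U (Proc.par V G))) :=
  (par_congL h _).trans <| (par_assoc _ _ _).trans <| par_congR S <|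
    (par_comm G (Proc.par U V)).trans (par_assoc U V G)

lemma rearr3 {W B G : Proc A} (h : Bisim W (Proc.par B G)) (M : Proc A) :
    Bisim (Proc.par W M) (Proc.par B (Proc.par M G)) :=
  (par_congL h M).trans <| (par_assoc _ _ _).trans (par_congR B (par_comm G M))

lemma rearr4 {W G P : Proc A} (h : Bisim W (Proc.par G P)) (M : Proc A) :
    Bisim (Proc.par M W) (Proc.par (Proc.par M G) P) :=
  (par_congR M h).trans (par_assoc M G P).symm

/-! ### Choice of garbage -/

open Classical in
noncomputable def garb (S : Proc A) (t : A × Proc A) : Proc A :=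
  if h : ∃ G, G.IsFin ∧ Bisim t.2 (Proc.par S G) then h.choose else Proc.nil

lemma garb_spec {S : Proc A} {t : A × Proc A}
    (h : ∃ G, G.IsFin ∧ Bisim t.2 (Proc.par S G)) :
    (garb S t).IsFin ∧ Bisim t.2 (Proc.par S (garb S t)) := by
  simp only [garb, dif_pos h]
  exact h.choose_spec

/-! ### The limit lemma: if `S ~ S|K^n` for all `n` then `S ~ S|!K`. -/

def Cnd (S K M X : Proc A) : Prop :=
  ∀ n, ∃ L : List (A × Proc A), (∀ c ∈ L, c ∈ comps K) ∧
    (∀ c ∈ comps K, n ≤ cnt c L) ∧ Bisim X (Proc.par S (Proc.par M (prodPre L)))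

def G0 (S K X Y : Proc A) : Prop :=
  ∃ M, M.IsFin ∧ Cnd S K M X ∧ Bisim Y (Proc.par S (Proc.par K.bang M))

def RL (S K X Y : Proc A) : Prop := G0 S K X Y ∨ G0 S K Y X

lemma cnt_cons_le {β : Type} (c d : β) (L : List β) : cnt c (d :: L) ≤ 1 + cnt c L := by
  by_cases h : d = c <;> simp [cnt, h]

lemma cnt_dec {c d : A × Proc A} {L L' : List (A × Proc A)} {n : ℕ}
    (hperm : L.Perm (d :: L')) (h : n + 1 ≤ cnt c L) : n ≤ cnt c L' := by
  have h2 := cnt_perm hperm c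
  have h3 := cnt_cons_le c d L'
  omega

lemma LC {S K : Proc A} (hS : ReplOnly S) (hK : K.IsFin)
    {X Y : Proc A} (hG : G0 S K X Y) {α : A} {X' : Proc A} (hx : Step X α X') :
    ∃ Y', Step Y α Y' ∧ UpC (RL S K) X' Y' := by
  obtain ⟨M, hM, hC, hY⟩ := hG
  have key : ∀ n, ∃ M' ∈ (((outs S).map fun t => Proc.par M (garb S t)) ++
      ((outs M).map fun t => t.2) ++
      ((comps K).map fun c => Proc.par M c.2)),
      (M'.IsFin ∧
        ∃ Z, Step (Proc.par S (Proc.par K.bang M)) α Z ∧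
          Bisim Z (Proc.par S (Proc.par K.bang M'))) ∧
      ∃ L, (∀ c ∈ L, c ∈ comps K) ∧ (∀ c ∈ comps K, n ≤ cnt c L) ∧
        Bisim X' (Proc.par S (Proc.par M' (prodPre L))) := by
    intro n
    obtain ⟨L, hLmem, hLcnt, hXL⟩ := hC (n+1)
    obtain ⟨Z, hZs, hXZ⟩ := bisim_step hXL hx
    rcases step_par_inv hZs with ⟨S', hsS, rfl⟩ | ⟨V, hsV, rfl⟩
    · -- the replicated part `S` moved
      obtain ⟨hfin, hBG⟩ := garb_spec (t := (α, S')) (replOnly_step hS hsS)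
      refine ⟨Proc.par M (garb S (α, S')),
        List.mem_append.2 (Or.inl (List.mem_append.2 (Or.inl
          (List.mem_map.2 ⟨(α, S'), mem_outs_of_step hsS, rfl⟩)))),
        ⟨(⟨hM, hfin⟩ : (Proc.par M (garb S (α, S'))).IsFin), Proc.par S' (Proc.par K.bang M), Step.parL _ hsS,
          rearr2 hBG _ _⟩,
        L, hLmem, fun c hc => Nat.le_trans (Nat.le_succ n) (hLcnt c hc),
        hXZ.trans (rearr1 hBG _ _)⟩
    · rcases step_par_inv hsV with ⟨M'', hsM', rfl⟩ | ⟨W, hsPL, rfl⟩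
      · -- the finite part `M` moved
        refine ⟨M'',
          List.mem_append.2 (Or.inl (List.mem_append.2 (Or.inr
            (List.mem_map.2 ⟨(α, M''), mem_outs_of_step hsM', rfl⟩)))),
          ⟨stepFin hsM' hM, Proc.par S (Proc.par K.bang M''),
            Step.parR _ (Step.parR _ hsM'), bisim_refl _⟩,
          L, hLmem, fun c hc => Nat.le_trans (Nat.le_succ n) (hLcnt c hc), hXZ⟩
      · -- a component from the soup of copies of `K` moved
        obtain ⟨G, L', hGL, hperm, hWB⟩ := ppStep1 hsPL
        have hcomps : (α, G) ∈ comps K := hLmem _ hGL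
        obtain ⟨W', hsBK, hW'B⟩ := bangStep2 hK hcomps
        refine ⟨Proc.par M G,
          List.mem_append.2 (Or.inr (List.mem_map.2 ⟨(α, G), hcomps, rfl⟩)),
          ⟨(⟨hM, comps_fin hK _ hcomps⟩ : (Proc.par M G).IsFin), Proc.par S (Proc.par W' M),
            Step.parR _ (Step.parL _ hsBK), par_congR S (rearr3 hW'B M)⟩,
          L', fun c hc => hLmem c (hperm.symm.subset (List.mem_cons_of_mem _ hc)),
          fun c hc => cnt_dec hperm (hLcnt c hc),
          hXZ.trans (par_congR S (rearr4 hWB M))⟩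
  obtain ⟨M', _, hQ⟩ := pigeon _ _ key
  obtain ⟨n₀, _, ⟨hM'fin, Z₀, hZ₀s, hZ₀B⟩, _⟩ := hQ 0
  have hCnd : Cnd S K M' X' := by
    intro m
    obtain ⟨n, hn, _, L, hmem, hcnt, hB⟩ := hQ m
    exact ⟨L, hmem, fun c hc => Nat.le_trans hn (hcnt c hc), hB⟩
  obtain ⟨Y', hYs, hZ₀Y'⟩ := bisim_step hY.symm hZ₀s
  exact ⟨Y', hYs, X', Proc.par S (Proc.par K.bang M'), bisim_refl _,
    Or.inl ⟨M', hM'fin, hCnd, bisim_refl _⟩, hZ₀B.symm.trans hZ₀Y'⟩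

lemma RC {S K : Proc A} (hS : ReplOnly S) (hK : K.IsFin)
    {X Y : Proc A} (hG : G0 S K X Y) {α : A} {Y₀ : Proc A} (hy : Step Y α Y₀) :
    ∃ X', Step X α X' ∧ UpC (RL S K) Y₀ X' := by
  obtain ⟨M, hM, hC, hY⟩ := hG
  obtain ⟨Z, hZs, hY₀Z⟩ := bisim_step hY hy
  rcases step_par_inv hZs with ⟨S', hsS, rfl⟩ | ⟨V, hsV, rfl⟩
  · -- `S` moved
    obtain ⟨hGfin, hBG⟩ := garb_spec (t := (α, S')) (replOnly_step hS hsS)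
    have hY₀ : Bisim Y₀ (Proc.par S (Proc.par K.bang (Proc.par M (garb S (α, S'))))) :=
      hY₀Z.trans (rearr2 hBG _ _)
    have key : ∀ n, ∃ X'' ∈ (outs X).map Prod.snd, Step X α X'' ∧
        ∃ L, (∀ c ∈ L, c ∈ comps K) ∧ (∀ c ∈ comps K, n ≤ cnt c L) ∧
          Bisim X'' (Proc.par S (Proc.par (Proc.par M (garb S (α, S'))) (prodPre L))) := by
      intro n
      obtain ⟨L, hmem, hcnt, hXL⟩ := hC n
      obtain ⟨X'', hXs, hrel⟩ := bisim_step hXL.symm (Step.parL _ hsS)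
      exact ⟨X'', List.mem_map.2 ⟨(α, X''), mem_outs_of_step hXs, rfl⟩, hXs,
        L, hmem, hcnt, hrel.symm.trans (rearr1 hBG _ _)⟩
    obtain ⟨X', _, hQ⟩ := pigeon _ _ key
    obtain ⟨n₀, _, hXs, _⟩ := hQ 0
    have hCnd : Cnd S K (Proc.par M (garb S (α, S'))) X' := by
      intro m
      obtain ⟨n, hn, _, L, hmem, hcnt, hB⟩ := hQ m
      exact ⟨L, hmem, fun c hc => Nat.le_trans hn (hcnt c hc), hB⟩
    exact ⟨X', hXs, Proc.par S (Proc.par K.bang (Proc.par M (garb S (α, S')))), X',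
      hY₀, Or.inr ⟨Proc.par M (garb S (α, S')),
        (⟨hM, hGfin⟩ : (Proc.par M (garb S (α, S'))).IsFin), hCnd, bisim_refl _⟩,
      bisim_refl _⟩
  · rcases step_par_inv hsV with ⟨W, hsBK, rfl⟩ | ⟨M'', hsM', rfl⟩
    · -- `!K` moved
      obtain ⟨G, hmemc, hWB⟩ := bangStep1 hK hsBK
      have hY₀ : Bisim Y₀ (Proc.par S (Proc.par K.bang (Proc.par M G))) :=
        hY₀Z.trans (par_congR S (rearr3 hWB M))
      have key : ∀ n, ∃ X'' ∈ (outs X).map Prod.snd, Step X α X'' ∧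
          ∃ L, (∀ c ∈ L, c ∈ comps K) ∧ (∀ c ∈ comps K, n ≤ cnt c L) ∧
            Bisim X'' (Proc.par S (Proc.par (Proc.par M G) (prodPre L))) := by
        intro n
        obtain ⟨L, hmem, hcnt, hXL⟩ := hC (n+1)
        have hGL : (α, G) ∈ L :=
          mem_of_cnt_pos (Nat.lt_of_lt_of_le (Nat.succ_pos n) (hcnt _ hmemc))
        obtain ⟨W₂, L', hsPL, hperm, hW₂B⟩ := ppStep2 hGL
        obtain ⟨X'', hXs, hrel⟩ := bisim_step hXL.symm (Step.parR _ (Step.parR _ hsPL))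
        exact ⟨X'', List.mem_map.2 ⟨(α, X''), mem_outs_of_step hXs, rfl⟩, hXs,
          L', fun c hc => hmem c (hperm.symm.subset (List.mem_cons_of_mem _ hc)),
          fun c hc => cnt_dec hperm (hcnt c hc),
          hrel.symm.trans (par_congR S (rearr4 hW₂B M))⟩
      obtain ⟨X', _, hQ⟩ := pigeon _ _ key
      obtain ⟨n₀, _, hXs, _⟩ := hQ 0
      have hCnd : Cnd S K (Proc.par M G) X' := by
        intro m
        obtain ⟨n, hn, _, L, hmem, hcnt, hB⟩ := hQ m
        exact ⟨L, hmem, fun c hc => Nat.le_trans hn (hcnt c hc), hB⟩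
      exact ⟨X', hXs, Proc.par S (Proc.par K.bang (Proc.par M G)), X',
        hY₀, Or.inr ⟨Proc.par M G,
          (⟨hM, comps_fin hK _ hmemc⟩ : (Proc.par M G).IsFin), hCnd, bisim_refl _⟩,
        bisim_refl _⟩
    · -- `M` moved
      have key : ∀ n, ∃ X'' ∈ (outs X).map Prod.snd, Step X α X'' ∧
          ∃ L, (∀ c ∈ L, c ∈ comps K) ∧ (∀ c ∈ comps K, n ≤ cnt c L) ∧
            Bisim X'' (Proc.par S (Proc.par M'' (prodPre L))) := by
        intro n
        obtain ⟨L, hmem, hcnt, hXL⟩ := hC n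
        obtain ⟨X'', hXs, hrel⟩ := bisim_step hXL.symm (Step.parR _ (Step.parL _ hsM'))
        exact ⟨X'', List.mem_map.2 ⟨(α, X''), mem_outs_of_step hXs, rfl⟩, hXs,
          L, hmem, hcnt, hrel.symm⟩
      obtain ⟨X', _, hQ⟩ := pigeon _ _ key
      obtain ⟨n₀, _, hXs, _⟩ := hQ 0
      have hCnd : Cnd S K M'' X' := by
        intro m
        obtain ⟨n, hn, _, L, hmem, hcnt, hB⟩ := hQ m
        exact ⟨L, hmem, fun c hc => Nat.le_trans hn (hcnt c hc), hB⟩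
      exact ⟨X', hXs, Proc.par S (Proc.par K.bang M''), X',
        hY₀Z, Or.inr ⟨M'', stepFin hsM' hM, hCnd, bisim_refl _⟩, bisim_refl _⟩

lemma reps_pp {K : Proc A} (hK : K.IsFin) (n : ℕ) :
    Bisim (Proc.reps n K) (prodPre (nCopies (comps K) n)) := by
  induction n with
  | zero => exact bisim_refl _
  | succ n ih =>
      exact (par_cong (comps_spec hK) ih).trans (prodPre_append _ _).symm

lemma lemL {S K : Proc A} (hS : ReplOnly S) (hK : K.IsFin)
    (hpump : ∀ n, Bisim S (Proc.par S (Proc.reps n K))) :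
    Bisim S (Proc.par S K.bang) := by
  refine bisim_of_upto (R := RL S K) ?_ ?_ ?_
  · rintro x y (h | h)
    · exact Or.inr h
    · exact Or.inl h
  · rintro p q (h | h) a p' hp
    · exact LC hS hK h hp
    · exact RC hS hK h hp
  · refine Or.inl ⟨Proc.nil, trivial, ?_, par_congR S (par_nil _).symm⟩
    intro n
    exact ⟨nCopies (comps K) n, fun c hc => mem_nCopies hc,
      fun c hc => cnt_nCopies hc n,
      (hpump n).trans (par_congR S ((reps_pp hK n).trans (nil_par _).symm))⟩

end CCS





/-- If `!F₁ | F'₁ ~ !F₂ | F'₂`, then `!F₁ ~ !F₂`. -/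
theorem bisim_bang_of_bisim_par {A : Type} [Countable A]
    (F₁ F₁' F₂ F₂' : CCS.Proc A)
    (h₁ : F₁.IsFin) (h₁' : F₁'.IsFin) (h₂ : F₂.IsFin) (h₂' : F₂'.IsFin)
    (h : CCS.Bisim (CCS.Proc.par F₁.bang F₁') (CCS.Proc.par F₂.bang F₂')) :
    CCS.Bisim F₁.bang F₂.bang := by
  have hA : CCS.ReplOnly F₁.bang := CCS.replOnly_bang h₁
  have hB : CCS.ReplOnly F₂.bang := CCS.replOnly_bang h₂
  obtain ⟨H, hHfin, hH⟩ :=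
    CCS.run hB F₁'.size F₁' h₁' rfl F₁.bang F₂' h₂' h
  obtain ⟨H', hH'fin, hH'⟩ :=
    CCS.run hA F₂'.size F₂' h₂' rfl F₂.bang F₁' h₁' h.symm
  have hKfin : (CCS.Proc.par H' H).IsFin := ⟨hH'fin, hHfin⟩
  have hAK : CCS.Bisim F₁.bang (CCS.Proc.par F₁.bang (CCS.Proc.par H' H)) :=
    hH.trans ((CCS.par_congL hH' H).trans (CCS.par_assoc _ _ _))
  have hpump : ∀ n, CCS.Bisim F₁.bang
      (CCS.Proc.par F₁.bang (CCS.Proc.reps n (CCS.Proc.par H' H))) := by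
    intro n
    induction n with
    | zero => exact (CCS.par_nil _).symm
    | succ n ih =>
        exact hAK.trans ((CCS.par_congL ih _).trans ((CCS.par_assoc _ _ _).trans
          (CCS.par_congR _ (CCS.par_comm _ _))))
  have hlim : CCS.Bisim F₁.bang
      (CCS.Proc.par F₁.bang (CCS.Proc.par H' H).bang) :=
    CCS.lemL hA hKfin hpump
  have habs : CCS.Bisim (CCS.Proc.par (CCS.Proc.par H' H).bang H')
      (CCS.Proc.par H' H).bang := by
    show CCS.Bisim (CCS.Proc.par (CCS.Proc.par H'.bang H.bang) H')
      (CCS.Proc.par H'.bang H.bang)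
    exact (CCS.par_rot _ _ _).trans (CCS.par_congL (CCS.bang_absorb hH'fin) _)
  have final : CCS.Bisim F₂.bang F₁.bang :=
    hH'.trans ((CCS.par_congL hlim H').trans ((CCS.par_assoc _ _ _).trans
      ((CCS.par_congR _ habs).trans hlim.symm)))
  exact final.symm
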